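/- Strict bound on the flux and interior smoothness (Step 1 in the proof of Theorem 3.1). Let ψ(s) = s/√(1+s²). Let h ∈ L¹(a,b) with h(x) ≥ 0 for almost every x ∈ (a,b), and let v ∈ W^{1,1}(a,b). Suppose there is an absolutely continuous function w on [a,b] such that w(x) = ψ(v'(x)) for almost every x ∈ (a,b) and w'(x) = −h(x) for almost every x ∈ (a,b). Then |w(x)| < 1 for every x ∈ (a,b); consequently v has a representative that is continuously differentiable on (a,b) with derivative ψ⁻¹(w) decreasing on (a,b) and locally absolutely continuous on (a,b), and this representative of v is concave on (a,b). -/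

import Mathlib

open Set Filter MeasureTheory Topology

lemma phi_psi (s : ℝ) :
    (s / Real.sqrt (1 + s ^ 2)) / Real.sqrt (1 - (s / Real.sqrt (1 + s ^ 2)) ^ 2) = s := by
  have h1 : (0:ℝ) < 1 + s ^ 2 := by positivity
  have hA : 0 < Real.sqrt (1 + s ^ 2) := Real.sqrt_pos.mpr h1
  have hA2 : Real.sqrt (1 + s ^ 2) ^ 2 = 1 + s ^ 2 := Real.sq_sqrt h1.le
  have key : 1 - (s / Real.sqrt (1 + s ^ 2)) ^ 2 = 1 / (1 + s ^ 2) := by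
    field_simp
    rw [hA2]; ring
  rw [key, one_div, Real.sqrt_inv]
  field_simp

lemma psi_abs_lt_one (s : ℝ) : |s / Real.sqrt (1 + s ^ 2)| < 1 := by
  have h1 : (0:ℝ) < 1 + s ^ 2 := by positivity
  have hA : 0 < Real.sqrt (1 + s ^ 2) := Real.sqrt_pos.mpr h1
  rw [abs_div, abs_of_pos hA, div_lt_one hA]
  calc |s| = Real.sqrt (s ^ 2) := (Real.sqrt_sq_eq_abs s).symm
  _ < Real.sqrt (1 + s ^ 2) := Real.sqrt_lt_sqrt (sq_nonneg s) (by linarith)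

lemma phi_hasDerivAt {r : ℝ} (hr : r ^ 2 < 1) :
    HasDerivAt (fun r : ℝ => r / Real.sqrt (1 - r ^ 2))
      (1 / ((1 - r ^ 2) * Real.sqrt (1 - r ^ 2))) r := by
  have hpos : (0:ℝ) < 1 - r ^ 2 := by linarith
  have hs : 0 < Real.sqrt (1 - r ^ 2) := Real.sqrt_pos.mpr hpos
  have hs2 : Real.sqrt (1 - r ^ 2) ^ 2 = 1 - r ^ 2 := Real.sq_sqrt hpos.le
  have hu : HasDerivAt (fun r : ℝ => 1 - r ^ 2) (-(2 * r)) r := by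
    simpa using (hasDerivAt_pow 2 r).const_sub (1:ℝ)
  have hsq : HasDerivAt (fun r : ℝ => Real.sqrt (1 - r ^ 2))
      (1 / (2 * Real.sqrt (1 - r ^ 2)) * (-(2 * r))) r :=
    (Real.hasDerivAt_sqrt hpos.ne').comp r hu
  have : HasDerivAt (fun r : ℝ => r / Real.sqrt (1 - r ^ 2))
      ((1 * Real.sqrt (1 - r ^ 2) - r * (1 / (2 * Real.sqrt (1 - r ^ 2)) * (-(2 * r)))) / Real.sqrt (1 - r ^ 2) ^ 2) r := (hasDerivAt_id' r).div hsq hs.ne'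
  convert this using 1
  field_simp
  linear_combination r ^ 2 * hs2

lemma phi_strictMonoOn : StrictMonoOn (fun r : ℝ => r / Real.sqrt (1 - r ^ 2)) (Ioo (-1) 1) := by
  have hc : ContinuousOn (fun r : ℝ => r / Real.sqrt (1 - r ^ 2)) (Ioo (-1) 1) := by
    apply ContinuousOn.div continuousOn_id
    · exact (Real.continuous_sqrt.comp (by continuity)).continuousOn
    · intro x hx
      have : x ^ 2 < 1 := by
        rw [sq_lt_one_iff_abs_lt_one, abs_lt]; exact ⟨hx.1, hx.2⟩
      exact (Real.sqrt_pos.mpr (by linarith)).ne'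
  refine strictMonoOn_of_deriv_pos (convex_Ioo _ _) hc ?_
  intro x hx
  rw [interior_Ioo] at hx
  have hx2 : x ^ 2 < 1 := by
    rw [sq_lt_one_iff_abs_lt_one, abs_lt]; exact ⟨hx.1, hx.2⟩
  rw [(phi_hasDerivAt hx2).deriv]
  have : (0:ℝ) < 1 - x ^ 2 := by linarith
  positivity

noncomputable def mkStieltjes (f : ℝ → ℝ) (hf : Monotone f) (hc : Continuous f) :
    StieltjesFunction ℝ := ⟨f, hf, fun _ => hc.continuousWithinAt⟩

lemma mkStieltjes_measure_Ioc (f : ℝ → ℝ) (hf : Monotone f) (hc : Continuous f) (x y : ℝ) :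
    (mkStieltjes f hf hc).measure (Ioc x y) = ENNReal.ofReal (f y - f x) :=
  StieltjesFunction.measure_Ioc _ x y


/-- **Strict bound on the flux and interior smoothness (Step 1 in the proof of Theorem 3.1).**
Let `ψ(s) = s/√(1+s²)`, let `h ∈ L¹(a,b)` with `h ≥ 0` a.e., `v ∈ W^{1,1}(a,b)`, and let `w` be
absolutely continuous on `[a,b]` with `w = ψ(v')` a.e. and `w' = -h` a.e. Then `|w| < 1` on
`(a,b)`, and (the continuous representative of) `v` is continuously differentiable on `(a,b)`
with derivative `ψ⁻¹(w) = w/√(1-w²)` decreasing and locally absolutely continuous on `(a,b)`,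
and `v` is concave on `(a,b)`. -/
theorem flux_strict_bound_interior_smoothness
    (a b : ℝ) (hab : a < b) (h v v' w : ℝ → ℝ)
    -- h ∈ L¹(a,b), h ≥ 0 a.e.
    (hh_int : IntegrableOn h (Ioo a b))
    (hh_nonneg : ∀ᵐ x ∂volume, x ∈ Ioo a b → 0 ≤ h x)
    -- v ∈ W^{1,1}(a,b)
    (hv_cont : ContinuousOn v (Icc a b))
    (hv'_int : IntegrableOn v' (Ioo a b))
    (hv_ftc : ∀ x ∈ Icc a b, v x = v a + ∫ t in a..x, v' t)
    -- w absolutely continuous on [a,b] with w' = -h a.e. and w = ψ(v') a.e.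
    (hw_ftc : ∀ x ∈ Icc a b, w x = w a + ∫ t in a..x, -h t)
    (hw_eq : ∀ᵐ x ∂volume, x ∈ Ioo a b → w x = v' x / Real.sqrt (1 + v' x ^ 2)) :
    (∀ x ∈ Ioo a b, |w x| < 1) ∧
    (∀ x ∈ Ioo a b, HasDerivAt v (w x / Real.sqrt (1 - w x ^ 2)) x) ∧
    ContinuousOn (fun x => w x / Real.sqrt (1 - w x ^ 2)) (Ioo a b) ∧
    AntitoneOn (fun x => w x / Real.sqrt (1 - w x ^ 2)) (Ioo a b) ∧
    (∀ c d : ℝ, a < c → c ≤ d → d < b → ∃ V : ℝ → ℝ,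
      IntegrableOn V (Icc c d) ∧ ∀ x ∈ Icc c d,
        w x / Real.sqrt (1 - w x ^ 2) = w c / Real.sqrt (1 - w c ^ 2) + ∫ t in c..x, V t) ∧
    ConcaveOn ℝ (Ioo a b) v := by
  have haIcc : a ∈ Icc a b := ⟨le_refl a, hab.le⟩
  have hIh : IntegrableOn h (Icc a b) := by
    rwa [integrableOn_Icc_iff_integrableOn_Ioo]
  have hIv' : IntegrableOn v' (Icc a b) := by
    rwa [integrableOn_Icc_iff_integrableOn_Ioo]
  have hinth : ∀ x ∈ Icc a b, ∀ y ∈ Icc a b, IntervalIntegrable h volume x y :=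
    fun x hx y hy => (hIh.mono_set (uIcc_subset_Icc hx hy)).intervalIntegrable
  have hintv' : ∀ x ∈ Icc a b, ∀ y ∈ Icc a b, IntervalIntegrable v' volume x y :=
    fun x hx y hy => (hIv'.mono_set (uIcc_subset_Icc hx hy)).intervalIntegrable
  have w_sub : ∀ x ∈ Icc a b, ∀ y ∈ Icc a b, w y - w x = -∫ t in x..y, h t := by
    intro x hx y hy
    rw [hw_ftc x hx, hw_ftc y hy]
    have h3 : (∫ t in a..y, -h t) - (∫ t in a..x, -h t) = ∫ t in x..y, -h t :=
      intervalIntegral.integral_interval_sub_left (hinth a haIcc y hy).neg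
        (hinth a haIcc x hx).neg
    simp only [intervalIntegral.integral_neg] at h3 ⊢
    linarith
  have hane : ∀ᵐ t : ℝ ∂volume, t ≠ a := by
    rw [ae_iff]
    simpa [not_not] using measure_singleton (α := ℝ) a
  have hbne : ∀ᵐ t : ℝ ∂volume, t ≠ b := by
    rw [ae_iff]
    simpa [not_not] using measure_singleton (α := ℝ) b
  have wanti : AntitoneOn w (Icc a b) := by
    intro x hx y hy hxy
    have hws := w_sub x hx y hy
    have hnn : 0 ≤ ∫ t in x..y, h t := by
      apply intervalIntegral.integral_nonneg_of_ae_restrict hxy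
      have : ∀ᵐ t ∂(volume.restrict (Icc x y)), 0 ≤ h t := by
        rw [ae_restrict_iff' measurableSet_Icc]
        filter_upwards [hh_nonneg, hane, hbne] with t h1 h2 h3 ht
        exact h1 ⟨lt_of_le_of_ne (hx.1.trans ht.1) (Ne.symm h2),
          lt_of_le_of_ne (ht.2.trans hy.2) h3⟩
      exact this
    linarith
  have wcont : ContinuousOn w (Icc a b) := by
    have hcp : ContinuousOn (fun x => w a + ∫ t in a..x, -h t) (Icc a b) := by
      apply ContinuousOn.add continuousOn_const
      have := intervalIntegral.continuousOn_primitive_interval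
        (f := fun t => -h t) (a := a) (b := b) (μ := volume)
        (by rw [uIcc_of_le hab.le]; exact hIh.neg)
      rwa [uIcc_of_le hab.le] at this
    exact hcp.congr (fun x hx => hw_ftc x hx)
  have habs : ∀ x ∈ Ioo a b, |w x| < 1 := by
    have hae : ∀ᵐ t ∂volume, t ∈ Ioo a b → |w t| < 1 := by
      filter_upwards [hw_eq] with t ht hti
      rw [ht hti]; exact psi_abs_lt_one _
    intro x hx
    have hIccx : x ∈ Icc a b := Ioo_subset_Icc_self hx
    have side : ∀ p q : ℝ, p < q → Ioo p q ⊆ Ioo a b → ∃ t ∈ Ioo p q, |w t| < 1 := by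
      intro p q hpq hsub
      haveI : (ae (volume.restrict (Ioo p q))).NeBot := by
        refine ae_neBot.mpr ?_
        simp only [Ne, Measure.restrict_eq_zero]
        simp [Real.volume_Ioo, hpq, sub_pos.mpr hpq]
      have h' : ∀ᵐ t ∂(volume.restrict (Ioo p q)), t ∈ Ioo a b → |w t| < 1 :=
        ae_restrict_of_ae hae
      obtain ⟨t, h1, h2⟩ := (h'.and (ae_restrict_mem measurableSet_Ioo)).exists
      exact ⟨t, h2, h1 (hsub h2)⟩
    obtain ⟨t1, ht1, hw1⟩ := side a x hx.1 (Ioo_subset_Ioo le_rfl hx.2.le)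
    obtain ⟨t2, ht2, hw2⟩ := side x b hx.2 (Ioo_subset_Ioo hx.1.le le_rfl)
    have ht1' : t1 ∈ Icc a b := ⟨ht1.1.le, (ht1.2.trans hx.2).le⟩
    have ht2' : t2 ∈ Icc a b := ⟨(hx.1.trans ht2.1).le, ht2.2.le⟩
    have hle1 : w x ≤ w t1 := wanti ht1' hIccx ht1.2.le
    have hle2 : w t2 ≤ w x := wanti hIccx ht2' ht2.1.le
    rw [abs_lt] at hw1 hw2 ⊢
    constructor <;> linarith
  have hden : ∀ x ∈ Ioo a b, 0 < Real.sqrt (1 - w x ^ 2) := by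
    intro x hx
    have := habs x hx
    rw [← sq_lt_one_iff_abs_lt_one] at this
    exact Real.sqrt_pos.mpr (by linarith)
  set g : ℝ → ℝ := fun x => w x / Real.sqrt (1 - w x ^ 2) with hg
  have gcont : ContinuousOn g (Ioo a b) := by
    apply ContinuousOn.div (wcont.mono Ioo_subset_Icc_self)
    · exact Real.continuous_sqrt.comp_continuousOn
        (continuousOn_const.sub ((wcont.mono Ioo_subset_Icc_self).pow 2))
    · exact fun x hx => (hden x hx).ne'
  have hv'g : ∀ᵐ t ∂volume, t ∈ Ioo a b → v' t = g t := by
    filter_upwards [hw_eq] with t ht hti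
    simp only [hg]
    rw [ht hti]
    exact (phi_psi (v' t)).symm
  have hderiv : ∀ x ∈ Ioo a b, HasDerivAt v (g x) x := by
    intro x hx
    have hxIcc : x ∈ Icc a b := Ioo_subset_Icc_self hx
    have hmem : Ioo a b ∈ 𝓝 x := isOpen_Ioo.mem_nhds hx
    have heq : (fun y => v x + ∫ t in x..y, g t) =ᶠ[𝓝 x] v := by
      filter_upwards [hmem] with y hy
      have hyIcc : y ∈ Icc a b := Ioo_subset_Icc_self hy
      have h1 : v y - v x = ∫ t in x..y, v' t := by
        rw [hv_ftc y hyIcc, hv_ftc x hxIcc]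
        have := intervalIntegral.integral_interval_sub_left
          (hintv' a haIcc y hyIcc) (hintv' a haIcc x hxIcc)
        linarith
      have h2 : ∫ t in x..y, v' t = ∫ t in x..y, g t := by
        apply intervalIntegral.integral_congr_ae
        filter_upwards [hv'g] with t ht hti
        exact ht ((Set.ordConnected_Ioo.uIcc_subset hx hy) (Set.uIoc_subset_uIcc hti))
      rw [← h2]
      linarith
    have hF : HasDerivAt (fun y => v x + ∫ t in x..y, g t) (g x) x := by
      apply HasDerivAt.const_add
      apply intervalIntegral.integral_hasDerivAt_right
      · exact IntervalIntegrable.refl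
      · exact gcont.stronglyMeasurableAtFilter isOpen_Ioo x hx
      · exact gcont.continuousAt hmem
    exact hF.congr_of_eventuallyEq heq.symm
  have ganti : AntitoneOn g (Ioo a b) := by
    intro x hx y hy hxy
    have h1 : w y ≤ w x := wanti (Ioo_subset_Icc_self hx) (Ioo_subset_Icc_self hy) hxy
    have hwx : w x ∈ Ioo (-1:ℝ) 1 := by
      have := habs x hx; rw [abs_lt] at this; exact this
    have hwy : w y ∈ Ioo (-1:ℝ) 1 := by
      have := habs y hy; rw [abs_lt] at this; exact this
    rcases eq_or_lt_of_le h1 with he | hlt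
    · simp only [hg, he]
      exact le_rfl
    · exact le_of_lt (phi_strictMonoOn hwy hwx hlt)
  have hconc : ConcaveOn ℝ (Ioo a b) v := by
    apply AntitoneOn.concaveOn_of_deriv (convex_Ioo a b) (hv_cont.mono Ioo_subset_Icc_self)
    · intro x hx
      rw [interior_Ioo] at hx
      exact (hderiv x hx).differentiableAt.differentiableWithinAt
    · intro x hx y hy hxy
      rw [interior_Ioo] at hx hy
      rw [(hderiv x hx).deriv, (hderiv y hy).deriv]
      exact ganti hx hy hxy
  refine ⟨habs, hderiv, gcont, ganti, ?_, hconc⟩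
  intro c d hacd hcd hdb
  have hcI : c ∈ Ioo a b := ⟨hacd, lt_of_le_of_lt hcd hdb⟩
  have hdI : d ∈ Ioo a b := ⟨lt_of_lt_of_le hacd hcd, hdb⟩
  have hIccsub : Icc c d ⊆ Ioo a b := fun t ht =>
    ⟨lt_of_lt_of_le hacd ht.1, lt_of_le_of_lt ht.2 hdb⟩
  set τ : ℝ → ℝ := fun x => max c (min x d) with hτ
  have hτ_mono : Monotone τ := fun x y hxy => max_le_max le_rfl (min_le_min hxy le_rfl)
  have hτ_cont : Continuous τ := continuous_const.max (continuous_id.min continuous_const)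
  have hτ_mem : ∀ x, τ x ∈ Icc c d := fun x => ⟨le_max_left _ _, max_le hcd (min_le_right _ _)⟩
  have hτ_id : ∀ x ∈ Icc c d, τ x = x := by
    intro x hx
    simp only [hτ]
    rw [min_eq_left hx.2, max_eq_right hx.1]
  have hτ_bot : ∀ x, x ≤ c → τ x = c := by
    intro x hx
    simp only [hτ]
    rw [min_eq_left (hx.trans hcd), max_eq_left hx]
  have hτ_top : ∀ x, d ≤ x → τ x = d := by
    intro x hx
    simp only [hτ]
    rw [min_eq_right hx, max_eq_right hcd]
  set q : ℝ := max (w c ^ 2) (w d ^ 2) with hqdef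
  have hq1 : q < 1 := by
    apply max_lt <;> rw [sq_lt_one_iff_abs_lt_one]
    exacts [habs c hcI, habs d hdI]
  have hq1' : (0:ℝ) < 1 - q := by linarith
  have hwcd : ∀ r : ℝ, w d ≤ r → r ≤ w c → r ^ 2 ≤ q := by
    intro r h1 h2
    rcases le_total 0 r with hs | hs
    · exact le_max_of_le_left (by nlinarith)
    · exact le_max_of_le_right (by nlinarith)
  set K : ℝ := 1 / ((1 - q) * Real.sqrt (1 - q)) with hKdef
  have hKpos : 0 < K := by
    rw [hKdef]; positivity
  have hwmemc : ∀ x ∈ Icc c d, w x ≤ w c ∧ w d ≤ w x := fun x hx =>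
    ⟨wanti (Ioo_subset_Icc_self hcI) (Ioo_subset_Icc_self (hIccsub hx)) hx.1,
      wanti (Ioo_subset_Icc_self (hIccsub hx)) (Ioo_subset_Icc_self hdI) hx.2⟩
  have hlip : ∀ x ∈ Icc c d, ∀ y ∈ Icc c d, x ≤ y → g x - g y ≤ K * (w x - w y) := by
    intro x hx y hy hxy
    have hwyx : w y ≤ w x :=
      wanti (Ioo_subset_Icc_self (hIccsub hx)) (Ioo_subset_Icc_self (hIccsub hy)) hxy
    have hr2 : ∀ r ∈ Icc (w y) (w x), r ^ 2 ≤ q := fun r hr =>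
      hwcd r ((hwmemc y hy).2.trans hr.1) (hr.2.trans (hwmemc x hx).1)
    have bound : ∀ r ∈ Ico (w y) (w x),
        ‖1 / ((1 - r ^ 2) * Real.sqrt (1 - r ^ 2))‖ ≤ K := by
      intro r hr
      have h2 : r ^ 2 ≤ q := hr2 r (Ico_subset_Icc_self hr)
      have hpos : (0:ℝ) < 1 - r ^ 2 := by linarith
      rw [Real.norm_eq_abs, abs_of_pos (by positivity), hKdef]
      apply one_div_le_one_div_of_le (by positivity)
      have hsq := Real.sqrt_le_sqrt (show 1 - q ≤ 1 - r ^ 2 by linarith)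
      have hsqpos := Real.sqrt_pos.mpr hq1'
      nlinarith [Real.sqrt_nonneg (1 - r ^ 2)]
    have key0 := norm_image_sub_le_of_norm_deriv_le_segment'
      (f := fun r : ℝ => r / Real.sqrt (1 - r ^ 2))
      (f' := fun r => 1 / ((1 - r ^ 2) * Real.sqrt (1 - r ^ 2)))
      (a := w y) (b := w x) (C := K)
      (fun r hr => (phi_hasDerivAt (lt_of_le_of_lt (hr2 r hr) hq1)).hasDerivWithinAt)
      bound (w x) (right_mem_Icc.mpr hwyx)
    have key : |g x - g y| ≤ K * (w x - w y) := by
      simpa [Real.norm_eq_abs, hg] using key0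
    have := le_abs_self (g x - g y)
    linarith
  set G : ℝ → ℝ := fun x => -(g (τ x)) with hGdef
  set Wf : ℝ → ℝ := fun x => -(w (τ x)) with hWdef
  set Bf : ℝ → ℝ := fun x => K * Wf x - G x with hBdef
  have hGmono : Monotone G := fun x y hxy =>
    neg_le_neg (ganti (hIccsub (hτ_mem x)) (hIccsub (hτ_mem y)) (hτ_mono hxy))
  have hWmono : Monotone Wf := fun x y hxy =>
    neg_le_neg (wanti (Ioo_subset_Icc_self (hIccsub (hτ_mem x)))
      (Ioo_subset_Icc_self (hIccsub (hτ_mem y))) (hτ_mono hxy))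
  have hBmono : Monotone Bf := by
    intro x y hxy
    have hl := hlip (τ x) (hτ_mem x) (τ y) (hτ_mem y) (hτ_mono hxy)
    simp only [hBdef, hWdef, hGdef]
    nlinarith [hl]
  have hGcont : Continuous G :=
    gcont.neg.comp_continuous hτ_cont (fun x => hIccsub (hτ_mem x))
  have hWcont : Continuous Wf :=
    (wcont.mono Ioo_subset_Icc_self).neg.comp_continuous hτ_cont (fun x => hIccsub (hτ_mem x))
  have hBcont : Continuous Bf := (continuous_const.mul hWcont).sub hGcont
  set SG : StieltjesFunction ℝ := mkStieltjes G hGmono hGcont with hSG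
  set SW : StieltjesFunction ℝ := mkStieltjes Wf hWmono hWcont with hSW
  set SB : StieltjesFunction ℝ := mkStieltjes Bf hBmono hBcont with hSB
  have hbotconst : ∀ F : ℝ → ℝ, Tendsto (fun x => F (τ x)) atBot (𝓝 (F c)) := by
    intro F
    refine Tendsto.congr' ?_ tendsto_const_nhds
    filter_upwards [eventually_le_atBot c] with x hx
    rw [hτ_bot x hx]
  have htopconst : ∀ F : ℝ → ℝ, Tendsto (fun x => F (τ x)) atTop (𝓝 (F d)) := by
    intro F
    refine Tendsto.congr' ?_ tendsto_const_nhds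
    filter_upwards [eventually_ge_atTop d] with x hx
    rw [hτ_top x hx]
  have hGbot : Tendsto G atBot (𝓝 (-(g c))) := hbotconst (fun t => -(g t))
  have hGtop : Tendsto G atTop (𝓝 (-(g d))) := htopconst (fun t => -(g t))
  have hWbot : Tendsto Wf atBot (𝓝 (-(w c))) := hbotconst (fun t => -(w t))
  have hWtop : Tendsto Wf atTop (𝓝 (-(w d))) := htopconst (fun t => -(w t))
  have hBbot : Tendsto Bf atBot (𝓝 (K * -(w c) - -(g c))) := (hWbot.const_mul K).sub hGbot
  have hBtop : Tendsto Bf atTop (𝓝 (K * -(w d) - -(g d))) := (hWtop.const_mul K).sub hGtop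
  haveI hfinG : IsFiniteMeasure SG.measure := SG.isFiniteMeasure hGbot hGtop
  haveI hfinB : IsFiniteMeasure SB.measure := SB.isFiniteMeasure hBbot hBtop
  have hset : ∀ x y : ℝ, Ioc c d ∩ Ioc x y = Ioc (τ x) (τ y) := by
    intro x y
    ext t
    simp only [mem_inter_iff, mem_Ioc, hτ, max_lt_iff, min_lt_iff, le_max_iff, le_min_iff]
    constructor
    · rintro ⟨⟨h1, h2⟩, h3, h4⟩
      exact ⟨⟨h1, Or.inl h3⟩, Or.inr ⟨h4, h2⟩⟩
    · rintro ⟨⟨h1, h2⟩, h3⟩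
      rcases h3 with h3 | h3
      · exact absurd h3 (not_le.mpr h1)
      · rcases h2 with h2 | h2
        · exact ⟨⟨h1, h3.2⟩, h2, h3.1⟩
        · exact absurd h3.2 (not_le.mpr h2)
  have hν : SW.measure = volume.withDensity
      (fun t => ENNReal.ofReal ((Ioc c d).indicator h t)) := by
    refine Measure.ext_of_Ioc _ _ (fun x y hxy => ?_)
    rw [hSW, mkStieltjes_measure_Ioc, withDensity_apply _ measurableSet_Ioc]
    have hof : (fun t => ENNReal.ofReal ((Ioc c d).indicator h t))
        = (Ioc c d).indicator (fun t => ENNReal.ofReal (h t)) := by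
      funext t
      simp only [Set.indicator_apply]
      split_ifs <;> simp
    rw [hof, lintegral_indicator measurableSet_Ioc,
      Measure.restrict_restrict measurableSet_Ioc, hset x y]
    have hτx : τ x ∈ Icc c d := hτ_mem x
    have hτy : τ y ∈ Icc c d := hτ_mem y
    have hττ : τ x ≤ τ y := hτ_mono hxy.le
    have hIocsub : Ioc (τ x) (τ y) ⊆ Ioo a b := fun t ht =>
      ⟨lt_of_lt_of_le (lt_of_lt_of_le hacd hτx.1) ht.1.le,
        lt_of_le_of_lt (ht.2.trans hτy.2) hdb⟩
    have hint2 : IntegrableOn h (Ioc (τ x) (τ y)) :=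
      hIh.mono_set (fun t ht => Ioo_subset_Icc_self (hIocsub ht))
    have hnn2 : 0 ≤ᵐ[volume.restrict (Ioc (τ x) (τ y))] h := by
      have : ∀ᵐ t ∂(volume.restrict (Ioc (τ x) (τ y))), 0 ≤ h t := by
        rw [ae_restrict_iff' measurableSet_Ioc]
        filter_upwards [hh_nonneg] with t h1 ht
        exact h1 (hIocsub ht)
      exact this
    rw [← ofReal_integral_eq_lintegral_ofReal hint2 hnn2]
    congr 1
    have hws := w_sub (τ x) (Ioo_subset_Icc_self (hIccsub hτx))
      (τ y) (Ioo_subset_Icc_self (hIccsub hτy))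
    rw [intervalIntegral.integral_of_le hττ] at hws
    simp only [hWdef]
    linarith
  have hsum : SG.measure + SB.measure = (ENNReal.ofReal K) • SW.measure := by
    refine Measure.ext_of_Ioc _ _ (fun x y hxy => ?_)
    rw [Measure.add_apply, Measure.smul_apply, smul_eq_mul, hSG, hSB, hSW,
      mkStieltjes_measure_Ioc, mkStieltjes_measure_Ioc, mkStieltjes_measure_Ioc]
    have e1 : 0 ≤ G y - G x := sub_nonneg.mpr (hGmono hxy.le)
    have e2 : 0 ≤ Bf y - Bf x := sub_nonneg.mpr (hBmono hxy.le)
    rw [← ENNReal.ofReal_add e1 e2, ← ENNReal.ofReal_mul hKpos.le]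
    congr 1
    simp only [hBdef]
    ring
  have hacμ : SG.measure ≪ (volume : Measure ℝ) := by
    intro s hs
    have hν0 : SW.measure s = 0 := by
      rw [hν]
      exact withDensity_absolutelyContinuous volume _ hs
    have hμs := congrArg (fun μ : Measure ℝ => μ s) hsum
    simp only [Measure.add_apply, Measure.smul_apply, smul_eq_mul, hν0, mul_zero] at hμs
    exact (add_eq_zero.mp hμs).1
  refine ⟨fun t => -((SG.measure.rnDeriv volume t).toReal), ?_, ?_⟩
  · exact ((Measure.integrable_toReal_rnDeriv (μ := SG.measure) (ν := volume)).neg).integrableOn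
  · intro x hx
    have hcx : c ≤ x := hx.1
    have hIoc : SG.measure (Ioc c x) = ENNReal.ofReal (G x - G c) := by
      rw [hSG, mkStieltjes_measure_Ioc]
    have hsint : ∫ t in Ioc c x, (SG.measure.rnDeriv volume t).toReal ∂volume
        = (SG.measure (Ioc c x)).toReal := Measure.setIntegral_toReal_rnDeriv hacμ _
    rw [intervalIntegral.integral_neg, intervalIntegral.integral_of_le hcx, hsint, hIoc,
      ENNReal.toReal_ofReal (sub_nonneg.mpr (hGmono hcx))]
    have hτc : τ c = c := hτ_id c ⟨le_rfl, hcd⟩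
    have hτx : τ x = x := hτ_id x hx
    simp only [hGdef, hτc, hτx]
    ring
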